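/- Jacobi-type identity: as formal power series, ∑_{k≥0} t^{k(k+1)/2} = ∏_{k≥1} (1+t^k)(1-t^{2k}). -/

import Mathlib

open PowerSeries Finset

namespace JTI


noncomputable abbrev XX : PowerSeries ℤ := PowerSeries.X

/-- triangular numbers -/
def T (k : ℕ) : ℕ := k * (k + 1) / 2

lemma T_succ (k : ℕ) : T (k + 1) = T k + (k + 1) := by
  have h : ∀ m : ℕ, T m = (m + 1).choose 2 := by
    intro m
    rw [Nat.choose_two_right, T]
    congr 1
    · simp [Nat.mul_comm]
  rw [h, h, Nat.choose_succ_succ (k+1) 1, Nat.choose_one_right, Nat.add_comm]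

lemma two_T (k : ℕ) : 2 * T k = k * (k + 1) := by
  rw [T, Nat.mul_div_cancel' ]
  exact even_iff_two_dvd.mp (Nat.even_mul_succ_self k)

lemma T_ge (k : ℕ) : k ≤ T k := by
  induction k with
  | zero => simp [T]
  | succ k ih => rw [T_succ]; omega

/-- Gaussian-binomial-like family: g m k = X^{T k} * [m choose k]_X -/
noncomputable def g : ℕ → ℕ → PowerSeries ℤ
  | 0, 0 => 1
  | 0, _ + 1 => 0
  | m + 1, 0 => g m 0
  | m + 1, k + 1 => g m (k + 1) + XX ^ (m + 1) * g m k

lemma g_zero (m : ℕ) : g m 0 = 1 := by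
  induction m with
  | zero => rfl
  | succ m ih => rw [g, ih]

lemma g_eq_zero_of_lt : ∀ m k, m < k → g m k = 0 := by
  intro m
  induction m with
  | zero => intro k hk; match k, hk with
            | k + 1, _ => rfl
  | succ m ih =>
      intro k hk
      match k, hk with
      | k + 1, hk =>
        rw [g, ih (k+1) (by omega), ih k (by omega), mul_zero, add_zero]

lemma g_diag : ∀ m, g m m = XX ^ (T m) := by
  intro m
  induction m with
  | zero => simp [g, T]
  | succ m ih =>
      rw [g, ih, g_eq_zero_of_lt m (m+1) (by omega), zero_add, ← pow_add, T_succ]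
      ring_nf


noncomputable def A (r : ℕ) : PowerSeries ℤ := ∏ j ∈ range r, (1 - XX ^ (j + 1))

lemma A_zero : A 0 = 1 := by simp [A]
lemma A_succ (r : ℕ) : A (r + 1) = A r * (1 - XX ^ (r + 1)) := by
  rw [A, prod_range_succ]; rfl

lemma A_ne_zero (r : ℕ) : A r ≠ 0 := by
  intro h
  have h1 : constantCoeff (A r) = (1 : ℤ) := by
    rw [A, map_prod]
    apply prod_eq_one
    intro j _
    simp
  rw [h, map_zero] at h1
  exact absurd h1 (by norm_num)

lemma P : ∀ m k, k ≤ m → g m k * (A k * A (m - k)) = XX ^ (T k) * A m := by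
  intro m
  induction m with
  | zero =>
      intro k hk
      obtain rfl : k = 0 := by omega
      simp [g_zero, A_zero, T]
  | succ m ih =>
      intro k hk
      match k with
      | 0 => simp [g_zero, A_zero, T]
      | k + 1 =>
        rcases Nat.lt_or_ge k m with hkm | hkm
        · obtain ⟨d, rfl⟩ : ∃ d, m = k + 1 + d := ⟨m - (k+1), by omega⟩
          have h1 := ih (k+1) (by omega)
          have h2 := ih k (by omega)
          simp only [show k + 1 + d - (k + 1) = d from by omega,
            show k + 1 + d - k = d + 1 from by omega,
            show k + 1 + d + 1 - (k + 1) = d + 1 from by omega] at h1 h2 ⊢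
          have hg : g (k + 1 + d + 1) (k + 1) = g (k+1+d) (k + 1) + XX ^ (k+1+d + 1) * g (k+1+d) k := rfl
          simp only [hg, A_succ d, A_succ k, A_succ (k+1+d), T_succ] at h1 h2 ⊢
          linear_combination (1 - XX^(d+1)) * h1 + XX^(k+1+d+1) * (1 - XX^(k+1)) * h2
        · obtain rfl : k = m := by omega
          rw [g_diag (k+1), Nat.sub_self, A_zero, mul_one, mul_comm]

lemma L1 (n : ℕ) : ∀ m, ∏ j ∈ range m, (XX ^ n + XX ^ (j + 1)) =
    ∑ k ∈ range (m + 1), XX ^ (n * (m - k)) * g m k := by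
  intro m
  induction m with
  | zero => simp [g_zero]
  | succ m ih =>
      rw [prod_range_succ, ih]
      have hg : ∀ k, g (m + 1) (k + 1) = g m (k + 1) + XX ^ (m + 1) * g m k := fun k => rfl
      have hS1 : ∑ k ∈ range (m + 1), XX ^ (n * (m - k)) * g m (k + 1) + XX ^ (n * (m + 1)) =
          XX ^ n * ∑ k ∈ range (m + 1), XX ^ (n * (m - k)) * g m k := by
        rw [sum_range_succ, g_eq_zero_of_lt m (m+1) (by omega), mul_zero, add_zero,
          mul_sum, sum_range_succ' (fun k => XX ^ n * (XX ^ (n * (m - k)) * g m k)) m]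
        congr 1
        · apply sum_congr rfl
          intro k hk
          rw [mem_range] at hk
          rw [show m - k = (m - (k+1)) + 1 from by omega, Nat.mul_succ, pow_add]
          ring
        · rw [Nat.sub_zero, Nat.mul_succ, pow_add, g_zero]
          ring
      rw [sum_range_succ' (fun k => XX ^ (n * (m + 1 - k)) * g (m + 1) k) (m + 1)]
      simp only [Nat.succ_sub_succ, hg, Nat.sub_zero]
      rw [show g (m+1) 0 = 1 from g_zero (m+1)]
      symm
      calc ∑ k ∈ range (m + 1), XX ^ (n * (m - k)) * (g m (k + 1) + XX ^ (m + 1) * g m k)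
            + XX ^ (n * (m + 1)) * 1
          = (∑ k ∈ range (m + 1), XX ^ (n * (m - k)) * g m (k + 1) + XX ^ (n * (m + 1)))
            + XX ^ (m + 1) * ∑ k ∈ range (m + 1), XX ^ (n * (m - k)) * g m k := by
            simp only [mul_add]
            rw [sum_add_distrib, mul_sum]
            have he : ∑ k ∈ range (m+1), XX ^ (n * (m - k)) * (XX ^ (m+1) * g m k)
                = ∑ k ∈ range (m+1), XX ^ (m+1) * (XX ^ (n * (m - k)) * g m k) := by
              apply sum_congr rfl
              intro k _
              ring
            rw [he]
            ring
        _ = (∑ k ∈ range (m + 1), XX ^ (n * (m - k)) * g m k) * (XX ^ n + XX ^ (m + 1)) := by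
            rw [hS1]; ring

lemma Asplit (a b : ℕ) : A a * ∏ j ∈ range b, (1 - XX ^ (a + 1 + j)) = A (a + b) := by
  rw [A, A, prod_range_add]
  congr 1
  apply prod_congr rfl
  intro j _
  congr 2
  omega

lemma gB (m k : ℕ) (hk : k ≤ m) :
    g m k * A m = XX ^ (T k) *
      ((∏ j ∈ range (m - k), (1 - XX ^ (k + 1 + j))) * ∏ j ∈ range k, (1 - XX ^ (m - k + 1 + j))) := by
  apply mul_right_cancel₀ (A_ne_zero m)
  have h1 : A k * ∏ j ∈ range (m - k), (1 - XX ^ (k + 1 + j)) = A m := by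
    have := Asplit k (m - k)
    rwa [show k + (m - k) = m from by omega] at this
  have h2 : A (m - k) * ∏ j ∈ range k, (1 - XX ^ (m - k + 1 + j)) = A m := by
    have := Asplit (m - k) k
    rwa [show m - k + k = m from by omega] at this
  calc g m k * A m * A m = g m k * (A k * ∏ j ∈ range (m - k), (1 - XX ^ (k + 1 + j))) *
        (A (m - k) * ∏ j ∈ range k, (1 - XX ^ (m - k + 1 + j))) := by rw [h1, h2]
    _ = (g m k * (A k * A (m - k))) *
        ((∏ j ∈ range (m - k), (1 - XX ^ (k + 1 + j))) * ∏ j ∈ range k, (1 - XX ^ (m - k + 1 + j))) := by ring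
    _ = _ := by rw [P m k hk]; ring

lemma sum_T (m : ℕ) : ∑ j ∈ range m, (j + 1) = T m := by
  induction m with
  | zero => simp [T]
  | succ m ih => rw [sum_range_succ, ih, T_succ]

lemma L3 (n : ℕ) : ∏ j ∈ range (2 * (n + 1)), (XX ^ (n + 1) + XX ^ (j + 1)) =
    XX ^ ((n + 1) * (n + 1) + T (n + 1)) *
      (2 * (1 + XX ^ (n + 1)) * (∏ j ∈ range n, (1 + XX ^ (j + 1))) ^ 2) := by
  rw [show 2 * (n + 1) = (n + 1) + (n + 1) from by ring, prod_range_add]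
  have hfirst : ∏ j ∈ range (n + 1), (XX ^ (n + 1) + XX ^ (j + 1)) =
      XX ^ (T (n + 1)) * (2 * ∏ j ∈ range n, (1 + XX ^ (j + 1))) := by
    have e : ∀ j ∈ range (n + 1), XX ^ (n + 1) + XX ^ (j + 1) = XX ^ (j + 1) * (1 + XX ^ (n - j)) := by
      intro j hj
      rw [mem_range] at hj
      rw [mul_add, mul_one, ← pow_add, show j + 1 + (n - j) = n + 1 from by omega, add_comm]
    rw [prod_congr rfl e, prod_mul_distrib, prod_pow_eq_pow_sum, sum_T]
    congr 1
    have hrefl : ∏ j ∈ range (n + 1), (1 + XX ^ (n - j)) = ∏ j ∈ range (n + 1), (1 + XX ^ j) := by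
      have := prod_range_reflect (fun j => 1 + XX ^ j) (n + 1)
      simpa using this
    rw [hrefl, prod_range_succ']
    norm_num
    ring
  have hsecond : ∏ j ∈ range (n + 1), (XX ^ (n + 1) + XX ^ (n + 1 + j + 1)) =
      XX ^ ((n + 1) * (n + 1)) * ((1 + XX ^ (n + 1)) * ∏ j ∈ range n, (1 + XX ^ (j + 1))) := by
    have e : ∀ j ∈ range (n + 1), XX ^ (n + 1) + XX ^ (n + 1 + j + 1) =
        XX ^ (n + 1) * (1 + XX ^ (j + 1)) := by
      intro j _
      rw [mul_add, mul_one, ← pow_add, show n + 1 + (j + 1) = n + 1 + j + 1 from by omega]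
    rw [prod_congr rfl e, prod_mul_distrib, prod_const, card_range, ← pow_mul, prod_range_succ]
    ring
  rw [hfirst, hsecond]
  ring

lemma dvd_prod_sub_one (c a b : ℕ) (h : c ≤ a) :
    XX ^ c ∣ (∏ j ∈ range b, (1 - XX ^ (a + j))) - 1 := by
  induction b with
  | zero => simp
  | succ b ih =>
      rw [prod_range_succ, show (∏ j ∈ range b, (1 - XX ^ (a + j))) * (1 - XX ^ (a + b)) - 1 =
        ((∏ j ∈ range b, (1 - XX ^ (a + j))) - 1) - XX ^ (a + b) * ∏ j ∈ range b, (1 - XX ^ (a + j)) from by ring]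
      exact dvd_sub ih ((pow_dvd_pow XX (by omega)).mul_right _)

lemma dvd_mul_sub_one {c : ℕ} {u v : PowerSeries ℤ} (hu : XX ^ c ∣ u - 1) (hv : XX ^ c ∣ v - 1) :
    XX ^ c ∣ u * v - 1 := by
  rw [show u * v - 1 = u * (v - 1) + (u - 1) from by ring]
  exact dvd_add (hv.mul_left u) hu

lemma E1 (n d : ℕ) (hd : d ≤ n) : n * (2 * n - (n + d)) + T (n + d) = n * n + T n + T d := by
  obtain ⟨c, rfl⟩ : ∃ c, n = d + c := ⟨n - d, by omega⟩
  rw [show 2 * (d + c) - (d + c + d) = c from by omega]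
  apply Nat.eq_of_mul_eq_mul_left (show 0 < 2 from by norm_num)
  simp only [Nat.mul_add, two_T]
  ring

lemma E2 (n k : ℕ) (hk : k < n) : n * (2 * n - k) + T k = n * n + T n + T (n - 1 - k) := by
  obtain ⟨c, rfl⟩ : ∃ c, n = k + 1 + c := ⟨n - 1 - k, by omega⟩
  rw [show k + 1 + c - 1 - k = c from by omega, show 2 * (k + 1 + c) - k = k + 2 + 2 * c from by omega]
  apply Nat.eq_of_mul_eq_mul_left (show 0 < 2 from by norm_num)
  simp only [Nat.mul_add, two_T]
  ring

lemma two_cancel {c : ℕ} {h : PowerSeries ℤ} (hd : XX ^ c ∣ 2 * h) : XX ^ c ∣ h := by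
  rw [PowerSeries.X_pow_dvd_iff] at hd ⊢
  intro m hm
  have := hd m hm
  rw [two_mul, map_add] at this
  omega

def tE (n k : ℕ) : ℕ := if n ≤ k then T (k - n) else T (n - 1 - k)

noncomputable def BB (n k : ℕ) : PowerSeries ℤ :=
  (∏ j ∈ range (2 * n - k), (1 - XX ^ (k + 1 + j))) * ∏ j ∈ range k, (1 - XX ^ (2 * n - k + 1 + j))

lemma keyExact (N : ℕ) :
    XX ^ ((N+1)*(N+1) + T (N+1)) *
      (2 * ((1 + XX^(N+1)) * (∏ j ∈ range N, (1 + XX^(j+1)))^2 * A (2*(N+1)))) =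
    XX ^ ((N+1)*(N+1) + T (N+1)) * ∑ k ∈ range (2*(N+1)+1), XX ^ (tE (N+1) k) * BB (N+1) k := by
  calc XX ^ ((N+1)*(N+1) + T (N+1)) *
      (2 * ((1 + XX^(N+1)) * (∏ j ∈ range N, (1 + XX^(j+1)))^2 * A (2*(N+1))))
      = (∏ j ∈ range (2*(N+1)), (XX^(N+1) + XX^(j+1))) * A (2*(N+1)) := by
        rw [L3 N]; ring
    _ = (∑ k ∈ range (2*(N+1)+1), XX ^ ((N+1) * (2*(N+1) - k)) * g (2*(N+1)) k) * A (2*(N+1)) := by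
        rw [L1 (N+1) (2*(N+1))]
    _ = ∑ k ∈ range (2*(N+1)+1), XX ^ ((N+1) * (2*(N+1) - k)) * (g (2*(N+1)) k * A (2*(N+1))) := by
        rw [sum_mul]; exact sum_congr rfl (fun k _ => by ring)
    _ = ∑ k ∈ range (2*(N+1)+1), XX ^ ((N+1) * (2*(N+1) - k)) * (XX ^ (T k) * BB (N+1) k) := by
        apply sum_congr rfl
        intro k hk
        rw [mem_range] at hk
        rw [gB (2*(N+1)) k (by omega)]
        rfl
    _ = ∑ k ∈ range (2*(N+1)+1), XX ^ ((N+1)*(N+1) + T (N+1)) * (XX ^ (tE (N+1) k) * BB (N+1) k) := by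
        apply sum_congr rfl
        intro k hk
        rw [mem_range] at hk
        have he : (N+1)*(2*(N+1)-k) + T k = (N+1)*(N+1) + T (N+1) + tE (N+1) k := by
          rcases le_or_gt (N+1) k with h | h
          · rw [tE, if_pos h]
            have := E1 (N+1) (k - (N+1)) (by omega)
            rwa [show N+1 + (k - (N+1)) = k from by omega] at this
          · rw [tE, if_neg (by omega)]
            exact E2 (N+1) k h
        rw [← mul_assoc, ← pow_add, ← mul_assoc, ← pow_add, he]
    _ = XX ^ ((N+1)*(N+1) + T (N+1)) * ∑ k ∈ range (2*(N+1)+1), XX ^ (tE (N+1) k) * BB (N+1) k := by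
        rw [mul_sum]

lemma hBdvd (N k : ℕ) (hk : k ≤ 2*(N+1)) :
    XX ^ (N+1) ∣ XX ^ (tE (N+1) k) * (BB (N+1) k - 1) := by
  set n := N + 1 with hn
  rcases le_or_gt n (tE n k) with ht | ht
  · exact Dvd.dvd.mul_right (pow_dvd_pow XX ht) _
  · have hB : XX ^ (n - tE n k) ∣ BB n k - 1 := by
      have h1 : n - tE n k ≤ k + 1 := by
        rcases le_or_gt n k with h | h
        · omega
        · have hg := T_ge (n - 1 - k)
          rw [tE, if_neg (by omega)]
          omega
      have h2 : n - tE n k ≤ 2*n - k + 1 := by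
        rcases le_or_gt n k with h | h
        · have hg := T_ge (k - n)
          rw [tE, if_pos h]
          omega
        · omega
      exact dvd_mul_sub_one (dvd_prod_sub_one _ _ _ h1) (dvd_prod_sub_one _ _ _ h2)
    have hXn : XX ^ n = XX ^ (tE n k) * XX ^ (n - tE n k) := by
      rw [← pow_add]
      congr 1
      omega
    rw [hXn]
    exact mul_dvd_mul_left _ hB

lemma hsplit (N : ℕ) : ∑ k ∈ range (2*(N+1)+1), XX ^ (tE (N+1) k) =
    2 * (∑ d ∈ range (N+1), XX ^ (T d)) + XX ^ (T (N+1)) := by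
  set n := N + 1 with hn
  rw [show 2*n+1 = n + (n+1) from by omega, sum_range_add]
  have h1 : ∑ k ∈ range n, XX ^ (tE n k) = ∑ d ∈ range n, XX ^ (T d) := by
    rw [← sum_range_reflect (fun j => XX ^ (T j)) n]
    apply sum_congr rfl
    intro k hk
    rw [mem_range] at hk
    rw [tE, if_neg (by omega)]
  have h2 : ∑ x ∈ range (n+1), XX ^ (tE n (n + x)) = ∑ d ∈ range n, XX ^ (T d) + XX ^ (T n) := by
    rw [← sum_range_succ (fun d => XX ^ (T d)) n]
    apply sum_congr rfl
    intro x _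
    rw [tE, if_pos (by omega), show n + x - n = x from by omega]
  rw [h1, h2]
  ring

theorem main (n : ℕ) :
    PowerSeries.coeff (R := ℤ) n (∑ k ∈ Finset.range (n + 1), (PowerSeries.X : PowerSeries ℤ) ^ (k * (k + 1) / 2)) =
    PowerSeries.coeff (R := ℤ) n (∏ k ∈ Finset.range (n + 1),
      (1 + (PowerSeries.X : PowerSeries ℤ) ^ (k + 1)) * (1 - (PowerSeries.X : PowerSeries ℤ) ^ (2 * (k + 1)))) := by
  -- notation
  set W : PowerSeries ℤ :=
    (1 + XX^(n+1)) * (∏ j ∈ range n, (1 + XX^(j+1)))^2 * A (2*(n+1)) with hW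
  set S : PowerSeries ℤ := ∑ d ∈ range (n+1), XX ^ (T d) with hS
  set G : PowerSeries ℤ := ∏ k ∈ Finset.range (n + 1),
      (1 + XX ^ (k + 1)) * (1 - XX ^ (2 * (k + 1))) with hG
  -- Step 1: exact identity  2*W = ∑ X^t B
  have hexact : 2 * W = ∑ k ∈ range (2*(n+1)+1), XX ^ (tE (n+1) k) * BB (n+1) k := by
    have := keyExact n
    exact mul_left_cancel₀ (pow_ne_zero _ PowerSeries.X_ne_zero) this
  -- Step 2: X^{n+1} ∣ 2W - 2S
  have hWS : XX ^ (n+1) ∣ W - S := by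
    apply two_cancel
    have hd1 : XX ^ (n+1) ∣ (∑ k ∈ range (2*(n+1)+1), XX ^ (tE (n+1) k) * BB (n+1) k)
        - ∑ k ∈ range (2*(n+1)+1), XX ^ (tE (n+1) k) := by
      rw [← sum_sub_distrib]
      apply dvd_sum
      intro k hk
      rw [mem_range] at hk
      rw [show XX ^ (tE (n+1) k) * BB (n+1) k - XX ^ (tE (n+1) k)
          = XX ^ (tE (n+1) k) * (BB (n+1) k - 1) from by ring]
      exact hBdvd n k (by omega)
    have hd2 : XX ^ (n+1) ∣ XX ^ (T (n+1)) := pow_dvd_pow XX (T_ge (n+1))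
    have : 2 * (W - S) = ((∑ k ∈ range (2*(n+1)+1), XX ^ (tE (n+1) k) * BB (n+1) k)
        - ∑ k ∈ range (2*(n+1)+1), XX ^ (tE (n+1) k)) + XX ^ (T (n+1)) := by
      rw [hsplit n, ← hexact]
      ring
    rw [this]
    exact dvd_add hd1 hd2
  -- Step 3: X^{n+1} ∣ G - W
  have hGW : XX ^ (n+1) ∣ G - W := by
    have hGeq : G = (∏ j ∈ range n, (1 + XX^(j+1)))^2 * (1 + XX^(n+1))^2 * A (n+1) := by
      rw [hG]
      have hfac : ∀ k ∈ range (n+1), (1 + XX ^ (k + 1)) * (1 - XX ^ (2 * (k + 1)))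
          = (1 + XX ^ (k+1))^2 * (1 - XX ^ (k+1)) := by
        intro k _
        rw [show 2 * (k+1) = (k+1) + (k+1) from by ring, pow_add]
        ring
      rw [prod_congr rfl hfac, prod_mul_distrib, prod_pow, prod_range_succ]
      rw [A]
      ring
    have hA2 : A (2*(n+1)) = A (n+1) * ∏ j ∈ range (n+1), (1 - XX ^ (n+1+1+j)) := by
      rw [Asplit (n+1) (n+1), show n+1 + (n+1) = 2*(n+1) from by ring]
    have hfac2 : XX ^ (n+1) ∣ (1 + XX^(n+1)) - ∏ j ∈ range (n+1), (1 - XX ^ (n+1+1+j)) := by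
      rw [show (1 + XX^(n+1)) - ∏ j ∈ range (n+1), (1 - XX ^ (n+1+1+j))
          = XX^(n+1) - ((∏ j ∈ range (n+1), (1 - XX ^ (n+1+1+j))) - 1) from by ring]
      exact dvd_sub dvd_rfl (dvd_prod_sub_one (n+1) (n+1+1) (n+1) (by omega))
    have : G - W = (∏ j ∈ range n, (1 + XX^(j+1)))^2 * (1 + XX^(n+1)) * A (n+1) *
        ((1 + XX^(n+1)) - ∏ j ∈ range (n+1), (1 - XX ^ (n+1+1+j))) := by
      rw [hGeq, hW, hA2]
      ring
    rw [this]
    exact Dvd.dvd.mul_left hfac2 _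
  -- Step 4: conclude
  have hGS : XX ^ (n+1) ∣ G - S := by
    have : G - S = (G - W) + (W - S) := by ring
    rw [this]
    exact dvd_add hGW hWS
  rw [PowerSeries.X_pow_dvd_iff] at hGS
  have hc := hGS n (by omega)
  rw [map_sub, sub_eq_zero] at hc
  exact (by simpa [T] using hc.symm : _)

end JTI

/-- Jacobi-type identity: as formal power series over `ℤ`,
`∑_{k≥0} t^{k(k+1)/2} = ∏_{k≥1} (1+t^k)(1-t^{2k})`, stated coefficientwise:
the `n`-th coefficient of the (stabilized) truncations agree. -/
theorem jacobi_triangular_identity :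
    ∀ n : ℕ,
      PowerSeries.coeff (R := ℤ) n (∑ k ∈ Finset.range (n + 1), (PowerSeries.X : PowerSeries ℤ) ^ (k * (k + 1) / 2)) =
      PowerSeries.coeff (R := ℤ) n (∏ k ∈ Finset.range (n + 1),
        (1 + (PowerSeries.X : PowerSeries ℤ) ^ (k + 1)) * (1 - (PowerSeries.X : PowerSeries ℤ) ^ (2 * (k + 1)))) := by
  exact JTI.main
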